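/- Let F₂ be the free group on x and y. The elements β₁ = x y³ and βₛ = x^{s-1}(x y³)x^{s-1} for s = 2, ..., n generate a free subgroup of F₂ of rank n, with the βₛ as a free basis. -/

import Mathlib

/-!
Statement 3: `β₁ = x y³` and `βₛ = x^{s-1} (x y³) x^{s-1}` for `s = 2, …, n` form a free
basis of a free subgroup of rank `n` of the free group `F₂` on `x, y` (note that the
general formula also gives `β₁` at `s = 1`).  Expressed via injectivity of the lift
`FreeGroup (Fin n) →* F₂`, the index `i : Fin n` corresponding to `s = i + 1`.
-/

namespace Stmt3

abbrev F2 := FreeGroup (Fin 2)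

def x : F2 := FreeGroup.of 0
def y : F2 := FreeGroup.of 1

def β (s : ℕ) : F2 := x ^ (s - 1) * (x * y ^ 3) * x ^ (s - 1)

abbrev Letter := Fin 2 × Bool

def R (p q : Letter) : Prop := ¬(p.1 = q.1 ∧ p.2 = !q.2)

def Reduced (L : List Letter) : Prop := List.Chain' R L

lemma R_self (p : Letter) : R p p := by simp [R]

lemma R_of_ne (p q : Letter) (h : p.1 ≠ q.1) : R p q := by simp [R, h]

lemma reduced_reduce (L : List Letter) : Reduced (FreeGroup.reduce L) := by
  induction L with
  | nil => exact List.isChain_nil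
  | cons a L ih =>
    rw [FreeGroup.reduce.cons]
    rcases h : FreeGroup.reduce L with _ | ⟨hd, tl⟩
    · simp [Reduced, List.Chain']
    · rw [h] at ih
      by_cases hc : a.1 = hd.1 ∧ a.2 = !hd.2
      · simpa [hc, Reduced, List.Chain'] using ih.tail
      · simp only [if_neg hc]
        exact List.isChain_cons_cons.mpr ⟨hc, ih⟩

lemma reduce_eq_self {L : List Letter} (h : Reduced L) : FreeGroup.reduce L = L := by
  induction L with
  | nil => rfl
  | cons a L ih =>
    rw [FreeGroup.reduce.cons, ih h.tail]
    cases L with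
    | nil => rfl
    | cons hd tl => exact if_neg (List.isChain_cons_cons.mp h).1

lemma reduced_toWord (g : F2) : Reduced g.toWord := by
  rw [← FreeGroup.reduce_toWord]; exact reduced_reduce _

lemma toWord_eq {L : List Letter} {g : F2} (h1 : FreeGroup.mk L = g) (h2 : Reduced L) :
    g.toWord = L := by
  rw [← h1, FreeGroup.toWord_mk, reduce_eq_self h2]

def xw : ℤ → List Letter
  | Int.ofNat n => List.replicate n (0, true)
  | Int.negSucc n => List.replicate (n + 1) (0, false)

lemma xw_zero : xw 0 = [] := rfl

lemma xw_natCast (n : ℕ) : xw (n : ℤ) = List.replicate n ((0 : Fin 2), true) := rfl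

lemma xw_neg_natCast (n : ℕ) : xw (-(n : ℤ)) = List.replicate n ((0 : Fin 2), false) := by
  cases n with
  | zero => rfl
  | succ n => rfl

lemma mk_replicate (k : ℕ) (p : Letter) :
    FreeGroup.mk (List.replicate k p) = (FreeGroup.mk [p]) ^ k := by
  induction k with
  | zero => rfl
  | succ k ih =>
    rw [List.replicate_succ, pow_succ', ← ih, FreeGroup.mul_mk, List.singleton_append]

lemma invRev_replicate (k : ℕ) (a : Fin 2) (b : Bool) :
    FreeGroup.invRev (List.replicate k (a, b)) = List.replicate k (a, !b) := by
  simp [FreeGroup.invRev]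

lemma mk_xw (j : ℤ) : FreeGroup.mk (xw j) = x ^ j := by
  cases j with
  | ofNat n =>
    rw [Int.ofNat_eq_coe, zpow_natCast, xw_natCast, mk_replicate]; rfl
  | negSucc n =>
    rw [zpow_negSucc, xw]
    have : (FreeGroup.mk [((0 : Fin 2), true)]) = x := rfl
    rw [← this, ← mk_replicate]
    have h2 : List.replicate (n+1) ((0:Fin 2), false) = FreeGroup.invRev (List.replicate (n+1) ((0:Fin 2), true)) := by
      rw [invRev_replicate]; rfl
    rw [h2, ← FreeGroup.inv_mk, mk_replicate]


lemma reduced_repl_append (n : ℕ) (p : Letter) {B : List Letter} (hB : Reduced B)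
    (h : ∀ q ∈ B.head?, R p q) : Reduced (List.replicate n p ++ B) := by
  induction n with
  | zero => simpa
  | succ n ih =>
    rw [List.replicate_succ, List.cons_append]
    refine List.isChain_cons.mpr ⟨?_, ih⟩
    intro q hq
    cases n with
    | zero => exact h q (by simpa using hq)
    | succ m =>
      rw [List.replicate_succ, List.cons_append, List.head?_cons, Option.mem_some_iff] at hq
      rw [← hq]
      exact R_self p

def headNotX (h : F2) : Prop := ∀ q ∈ h.toWord.head?, q.1 = 1

def yb (c : Bool) : F2 := FreeGroup.mk [((1 : Fin 2), c)]

lemma yb_true : yb true = y := rfl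

lemma yb_false : yb false = y⁻¹ := by
  have : FreeGroup.invRev [((1:Fin 2), true)] = [((1:Fin 2), false)] := rfl
  rw [yb, ← this, ← FreeGroup.inv_mk]; rfl

/-- The master computation: the reduced word of `x^t * yb c ^ k * x^m * h`. -/
lemma prodWord (t m : ℤ) (c : Bool) (k : ℕ) (hk : k ≠ 0) (h : F2) (hh : headNotX h)
    (hm : m = 0 → ∀ q ∈ h.toWord.head?, q ≠ ((1 : Fin 2), !c)) :
    (x ^ t * yb c ^ k * x ^ m * h).toWord
      = xw t ++ (List.replicate k ((1 : Fin 2), c) ++ (xw m ++ h.toWord)) := by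
  apply toWord_eq
  · rw [← FreeGroup.mul_mk, ← FreeGroup.mul_mk, ← FreeGroup.mul_mk,
      mk_xw, mk_xw, mk_replicate, FreeGroup.mk_toWord]
    simp [yb, mul_assoc]
  · -- Reducedness
    have hB1 : Reduced (xw m ++ h.toWord) := by
      obtain ⟨nm, bm, hxm⟩ : ∃ nm bm, xw m = List.replicate nm ((0 : Fin 2), bm) := by
        cases m with
        | ofNat n => exact ⟨n, true, rfl⟩
        | negSucc n => exact ⟨n + 1, false, rfl⟩
      rw [hxm]
      refine reduced_repl_append _ _ (reduced_toWord h) ?_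
      intro q hq
      exact R_of_ne _ _ (by rw [hh q hq]; simp)
    have hB2 : Reduced (List.replicate k ((1 : Fin 2), c) ++ (xw m ++ h.toWord)) := by
      refine reduced_repl_append _ _ hB1 ?_
      intro q hq
      by_cases hm0 : m = 0
      · subst hm0
        rw [show xw 0 = [] from rfl, List.nil_append] at hq
        have h1 := hh q hq
        have h2 := hm rfl q hq
        refine fun hc => h2 ?_
        obtain ⟨q1, q2⟩ := q
        obtain ⟨e1, e2⟩ := hc
        simp only at h1 e1 e2
        simp [h1, e2]
      · obtain ⟨nm, bm, hxm⟩ : ∃ nm bm, xw m = List.replicate (nm + 1) ((0 : Fin 2), bm) := by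
          cases m with
          | ofNat n =>
            cases n with
            | zero => exact absurd rfl hm0
            | succ n => exact ⟨n, true, rfl⟩
          | negSucc n => exact ⟨n, false, rfl⟩
        rw [hxm, List.replicate_succ, List.cons_append, List.head?_cons,
          Option.mem_some_iff] at hq
        exact R_of_ne _ _ (by rw [← hq]; simp)
    obtain ⟨nt, bt, hxt⟩ : ∃ nt bt, xw t = List.replicate nt ((0 : Fin 2), bt) := by
      cases t with
      | ofNat n => exact ⟨n, true, rfl⟩
      | negSucc n => exact ⟨n + 1, false, rfl⟩
    rw [hxt]
    refine reduced_repl_append _ _ hB2 ?_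
    intro q hq
    obtain ⟨k', rfl⟩ : ∃ k', k = k' + 1 := Nat.exists_eq_succ_of_ne_zero hk
    rw [List.replicate_succ, List.cons_append, List.head?_cons, Option.mem_some_iff] at hq
    exact R_of_ne _ _ (by rw [← hq]; simp)


lemma mk_single (b : Bool) :
    FreeGroup.mk [((0 : Fin 2), b)] = x ^ (if b then (1 : ℤ) else -1) := by
  cases b
  · rw [if_neg (by simp), zpow_neg, zpow_one]
    have : FreeGroup.invRev [((0 : Fin 2), true)] = [((0 : Fin 2), false)] := rfl
    rw [← this, ← FreeGroup.inv_mk]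
    rfl
  · rw [if_pos rfl, zpow_one]
    rfl

lemma decomp (g : F2) : ∃ (j : ℤ) (h : F2),
    g = x ^ j * h ∧ g.toWord = xw j ++ h.toWord ∧ headNotX h := by
  suffices H : ∀ (N : ℕ) (g : F2), g.toWord.length ≤ N →
      ∃ (j : ℤ) (h : F2), g = x ^ j * h ∧ g.toWord = xw j ++ h.toWord ∧ headNotX h from
    H g.toWord.length g le_rfl
  intro N
  induction N with
  | zero =>
    intro g hg
    have : g.toWord = [] := List.eq_nil_of_length_eq_zero (Nat.le_zero.mp hg)
    exact ⟨0, g, by simp, by simp [xw_zero], fun q hq => by simp [this] at hq⟩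
  | succ N ih =>
    intro g hg
    rcases hw : g.toWord with _ | ⟨⟨c, b⟩, tl⟩
    · exact ⟨0, g, by simp, by rw [xw_zero, List.nil_append]; exact hw.symm, fun q hq => by simp [hw] at hq⟩
    by_cases hc : c = 1
    · refine ⟨0, g, by simp, by rw [xw_zero, List.nil_append]; exact hw.symm, fun q hq => ?_⟩
      rw [hw, List.head?_cons, Option.mem_some_iff] at hq
      rw [← hq, hc]
    have hc0 : c = 0 := by omega
    subst hc0
    have hred : Reduced (((0 : Fin 2), b) :: tl) := hw ▸ reduced_toWord g
    have htl : (FreeGroup.mk tl).toWord = tl := toWord_eq rfl hred.tail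
    have hlen : (FreeGroup.mk tl).toWord.length ≤ N := by
      rw [htl]
      have h2 := hg
      rw [hw, List.length_cons] at h2
      omega
    obtain ⟨j', h, hg', hw', hh⟩ := ih (FreeGroup.mk tl) hlen
    rw [htl] at hw'
    have hsplit : g = x ^ (if b then (1 : ℤ) else -1) * FreeGroup.mk tl := by
      conv_lhs => rw [← FreeGroup.mk_toWord (x := g), hw]
      rw [show (((0 : Fin 2), b) :: tl) = [((0 : Fin 2), b)] ++ tl from rfl,
        ← FreeGroup.mul_mk, mk_single]
    rw [hw'] at hred
    have hxwj : xw ((if b then (1 : ℤ) else -1) + j') = ((0 : Fin 2), b) :: xw j' := by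
      cases b
      · rw [if_neg (by simp)]
        cases j' with
        | ofNat n =>
          cases n with
          | zero => rfl
          | succ n =>
            exfalso
            rw [show xw (Int.ofNat (n + 1)) = ((0 : Fin 2), true) :: List.replicate n ((0 : Fin 2), true) from rfl, List.cons_append] at hred
            exact (List.isChain_cons_cons.mp hred).1 ⟨rfl, rfl⟩
        | negSucc n =>
          rw [show (-1 + Int.negSucc n) = Int.negSucc (n + 1) by rw [Int.negSucc_eq, Int.negSucc_eq]; omega]
          rfl
      · rw [if_pos rfl]
        cases j' with
        | ofNat n =>
          rw [show ((1 : ℤ) + Int.ofNat n) = Int.ofNat (n + 1) by simp only [Int.ofNat_eq_natCast]; omega]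
          rw [xw, xw, List.replicate_succ]
        | negSucc n =>
          exfalso
          rw [show xw (Int.negSucc n) = ((0 : Fin 2), false) :: List.replicate n ((0 : Fin 2), false) from rfl, List.cons_append] at hred
          exact (List.isChain_cons_cons.mp hred).1 ⟨rfl, rfl⟩
    refine ⟨(if b then (1 : ℤ) else -1) + j', h, ?_, ?_, hh⟩
    · rw [hsplit, hg', ← mul_assoc, ← zpow_add]
    · rw [hxwj, hw', List.cons_append]


def XS (nn : ℕ) (i : Fin nn) : Set F2 :=
  {g | ∃ l, g.toWord
      = List.replicate ((i : ℕ) + 1) ((0 : Fin 2), true) ++ ((1 : Fin 2), true) :: l}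

def YS (nn : ℕ) (i : Fin nn) : Set F2 :=
  {g | ∃ l, g.toWord
      = List.replicate (i : ℕ) ((0 : Fin 2), false) ++ ((1 : Fin 2), false) :: l}

lemma clash1 {a p q : Letter} (hp : p ≠ a) (hq : q ≠ a) :
    ∀ {m n : ℕ} {l l' : List Letter},
      List.replicate m a ++ p :: l = List.replicate n a ++ q :: l' → m = n := by
  intro m
  induction m with
  | zero =>
    intro n l l' h
    cases n with
    | zero => rfl
    | succ n =>
      simp only [List.replicate_zero, List.nil_append, List.replicate_succ, List.cons_append,
        List.cons.injEq] at h
      exact absurd h.1 hp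
  | succ m ih =>
    intro n l l' h
    cases n with
    | zero =>
      simp only [List.replicate_zero, List.nil_append, List.replicate_succ, List.cons_append,
        List.cons.injEq] at h
      exact absurd h.1.symm hq
    | succ n =>
      rw [List.replicate_succ, List.replicate_succ, List.cons_append, List.cons_append,
        List.cons.injEq] at h
      rw [ih h.2]

lemma clash2 {a b p q : Letter} (hab : a ≠ b) (hpb : p ≠ b) (hqa : q ≠ a) (hpq : p ≠ q)
    {m n : ℕ} {l l' : List Letter} :
    List.replicate m a ++ p :: l ≠ List.replicate n b ++ q :: l' := by
  intro h
  cases m <;> cases n <;>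
    simp only [List.replicate_succ, List.cons_append, List.nil_append, List.cons.injEq,
      List.replicate_zero] at h
  · exact hpq h.1
  · exact hpb h.1
  · exact hqa h.1.symm
  · exact hab h.1

lemma cast_succ (i : ℕ) : ((i : ℤ) + 1) = (((i + 1 : ℕ) : ℤ)) := by push_cast; ring

theorem main (nn : ℕ) :
    Function.Injective (FreeGroup.lift fun i : Fin (nn + 2) => β ((i : ℕ) + 1)) := by
  apply FreeGroup.injective_lift_of_ping_pong _ (XS (nn + 2)) (YS (nn + 2))
  · -- nonempty
    intro i
    refine ⟨x ^ ((i : ℕ) + 1) * y, ?_⟩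
    have hw := prodWord (((i : ℕ) : ℤ) + 1) 0 true 1 one_ne_zero 1
      (by intro q hq; simp [FreeGroup.toWord_one] at hq)
      (by intro _ q hq; simp [FreeGroup.toWord_one] at hq)
    have he : x ^ (((i : ℕ) : ℤ) + 1) * yb true ^ 1 * x ^ (0 : ℤ) * 1
        = x ^ ((i : ℕ) + 1) * y := by
      rw [yb_true, pow_one, zpow_zero, mul_one, mul_one, cast_succ, zpow_natCast]
    rw [he] at hw
    refine ⟨[], ?_⟩
    rw [hw, cast_succ, xw_natCast, xw_zero]
    simp [FreeGroup.toWord_one]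
  · -- X pairwise disjoint
    intro i j hij
    rw [Function.onFun, Set.disjoint_left]
    rintro g ⟨l, hl⟩ ⟨l', hl'⟩
    have := clash1 (a := ((0 : Fin 2), true)) (p := ((1 : Fin 2), true))
      (q := ((1 : Fin 2), true)) (by decide) (by decide) (hl.symm.trans hl')
    exact hij (Fin.ext (by omega))
  · -- Y pairwise disjoint
    intro i j hij
    rw [Function.onFun, Set.disjoint_left]
    rintro g ⟨l, hl⟩ ⟨l', hl'⟩
    have := clash1 (a := ((0 : Fin 2), false)) (p := ((1 : Fin 2), false))
      (q := ((1 : Fin 2), false)) (by decide) (by decide) (hl.symm.trans hl')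
    exact hij (Fin.ext (by omega))
  · -- X vs Y disjoint
    intro i j
    rw [Set.disjoint_left]
    rintro g ⟨l, hl⟩ ⟨l', hl'⟩
    exact clash2 (by decide) (by decide) (by decide) (by decide) (hl.symm.trans hl')
  · -- hX
    intro i g' hg'
    obtain ⟨g, hg, rfl⟩ := hg'
    obtain ⟨j, h, rfl, hwg, hh⟩ := decomp g
    show β ((i : ℕ) + 1) * (x ^ j * h) ∈ XS (nn + 2) i
    have hsm : β ((i : ℕ) + 1) * (x ^ j * h)
        = x ^ (((i : ℕ) : ℤ) + 1) * yb true ^ 3 * x ^ (((i : ℕ) : ℤ) + j) * h := by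
      rw [show β ((i : ℕ) + 1) = x ^ (i : ℕ) * (x * y ^ 3) * x ^ (i : ℕ) from rfl, yb_true,
        ← zpow_natCast x (i : ℕ)]
      group
    have hm : ((i : ℕ) : ℤ) + j = 0 → ∀ q ∈ h.toWord.head?, q ≠ ((1 : Fin 2), !true) := by
      intro h0 q hq hqe
      apply hg
      have hj : j = -((i : ℕ) : ℤ) := by omega
      cases hht : h.toWord with
      | nil => simp [hht] at hq
      | cons q0 rest =>
        rw [hht, List.head?_cons, Option.mem_some_iff] at hq
        refine ⟨rest, ?_⟩
        rw [hwg, hj, xw_neg_natCast, hht, hq, hqe]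
        rfl
    have hw3 := prodWord (((i : ℕ) : ℤ) + 1) (((i : ℕ) : ℤ) + j) true 3 (by norm_num) h hh hm
    refine ⟨List.replicate 2 ((1 : Fin 2), true) ++ (xw (((i : ℕ) : ℤ) + j) ++ h.toWord), ?_⟩
    rw [hsm, hw3, cast_succ, xw_natCast,
      show List.replicate 3 ((1 : Fin 2), true)
        = ((1 : Fin 2), true) :: List.replicate 2 ((1 : Fin 2), true) from rfl]
    simp
  · -- hY
    intro i g' hg'
    obtain ⟨g, hg, rfl⟩ := hg'
    obtain ⟨j, h, rfl, hwg, hh⟩ := decomp g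
    show (β ((i : ℕ) + 1))⁻¹ * (x ^ j * h) ∈ YS (nn + 2) i
    have hsm : (β ((i : ℕ) + 1))⁻¹ * (x ^ j * h)
        = x ^ (-((i : ℕ) : ℤ)) * yb false ^ 3 * x ^ (j - (((i : ℕ) : ℤ) + 1)) * h := by
      rw [show β ((i : ℕ) + 1) = x ^ (i : ℕ) * (x * y ^ 3) * x ^ (i : ℕ) from rfl, yb_false,
        ← zpow_natCast x (i : ℕ)]
      group
    have hm : j - (((i : ℕ) : ℤ) + 1) = 0 → ∀ q ∈ h.toWord.head?, q ≠ ((1 : Fin 2), !false) := by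
      intro h0 q hq hqe
      apply hg
      have hj : j = ((i : ℕ) : ℤ) + 1 := by omega
      cases hht : h.toWord with
      | nil => simp [hht] at hq
      | cons q0 rest =>
        rw [hht, List.head?_cons, Option.mem_some_iff] at hq
        refine ⟨rest, ?_⟩
        rw [hwg, hj, cast_succ, xw_natCast, hht, hq, hqe]
        rfl
    have hw3 := prodWord (-((i : ℕ) : ℤ)) (j - (((i : ℕ) : ℤ) + 1)) false 3 (by norm_num) h hh hm
    refine ⟨List.replicate 2 ((1 : Fin 2), false)
      ++ (xw (j - (((i : ℕ) : ℤ) + 1)) ++ h.toWord), ?_⟩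
    rw [hsm, hw3, xw_neg_natCast,
      show List.replicate 3 ((1 : Fin 2), false)
        = ((1 : Fin 2), false) :: List.replicate 2 ((1 : Fin 2), false) from rfl]
    simp

theorem stmt_3 (n : ℕ) :
    Function.Injective (FreeGroup.lift fun i : Fin n => β ((i : ℕ) + 1)) := by
  rcases n with _ | m
  · intro a b _
    exact Subsingleton.elim a b
  · -- n = m + 1 ≥ 1
    set n := m + 1 with hn
    have hle : n ≤ n + 2 := by omega
    have hcomp : (FreeGroup.lift fun i : Fin (n + 2) => β ((i : ℕ) + 1)).comp
        (FreeGroup.map (Fin.castLE hle)) = FreeGroup.lift fun i : Fin n => β ((i : ℕ) + 1) := by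
      apply FreeGroup.ext_hom
      intro a
      simp [Fin.coe_castLE]
    have hmapinj : Function.Injective (FreeGroup.map (Fin.castLE hle)) := by
      have hretr : ∀ z : FreeGroup (Fin n),
          FreeGroup.map (fun k : Fin (n + 2) => if h : (k : ℕ) < n then (⟨k, h⟩ : Fin n)
            else ⟨0, by omega⟩) (FreeGroup.map (Fin.castLE hle) z) = z := by
        intro z
        rw [FreeGroup.map.comp]
        have : ((fun k : Fin (n + 2) => if h : (k : ℕ) < n then (⟨k, h⟩ : Fin n)
            else ⟨0, by omega⟩) ∘ Fin.castLE hle) = id := by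
          funext a
          simp only [Function.comp_apply, Fin.coe_castLE, id_eq]
          rw [dif_pos a.isLt]
        rw [this, FreeGroup.map.id]
      exact Function.LeftInverse.injective hretr
    rw [← hcomp, MonoidHom.coe_comp]
    exact (main n).comp hmapinj

end Stmt3
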